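/- For linear classifiers f(x) = w·x with ‖w‖₂ = 1, the adversarial robust reject option loss ℓ_d^γ(yf(x), ρ) := (1−d)·sup_{‖x−x′‖≤γ} 𝟙{yf(x′) < −ρ} + d·sup_{‖x−x′‖≤γ} 𝟙{yf(x′) ≤ ρ} equals the γ-right-shifted reject option loss (1−d)·𝟙{yf(x) < −ρ+γ} + d·𝟙{yf(x) ≤ ρ+γ}. -/

import Mathlib

open scoped RealInnerProductSpace Classical

lemma sSup_indicator_image {α : Type*} (S : Set α) (hS : S.Nonempty) (P : α → Prop) :
    sSup ((fun a => if P a then (1 : ℝ) else 0) '' S)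
      = if ∃ a ∈ S, P a then (1 : ℝ) else 0 := by
  classical
  have hbdd : ∀ b ∈ (fun a => if P a then (1 : ℝ) else 0) '' S, b ≤ 1 := by
    rintro b ⟨a, _, rfl⟩
    by_cases h : P a <;> simp [h]
  by_cases h : ∃ a ∈ S, P a
  · obtain ⟨a, ha, hPa⟩ := h
    have h1 : (1 : ℝ) ∈ (fun a => if P a then (1 : ℝ) else 0) '' S := by
      exact ⟨a, ha, by simp [hPa]⟩
    rw [if_pos ⟨a, ha, hPa⟩]
    exact le_antisymm (csSup_le ⟨_, h1⟩ hbdd) (le_csSup ⟨1, hbdd⟩ h1)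
  · rw [if_neg h]
    have himg : (fun a => if P a then (1 : ℝ) else 0) '' S = {0} := by
      ext b
      constructor
      · rintro ⟨a, ha, rfl⟩
        have hna : ¬ P a := fun hPa => h ⟨a, ha, hPa⟩
        simp [hna]
      · rintro rfl
        obtain ⟨a, ha⟩ := hS
        exact ⟨a, ha, by simp [show ¬ P a from fun hPa => h ⟨a, ha, hPa⟩]⟩
    simp [himg]

theorem adv_robust_reject_loss_linear_eq_shift {n : ℕ} (w x : EuclideanSpace ℝ (Fin n))
    (hw : ‖w‖ = 1) (y : ℝ) (hy : y = -1 ∨ y = 1) (d ρ γ : ℝ)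
    (hd : d ∈ Set.Ioo (0 : ℝ) (1 / 2)) (hρ : 0 < ρ) (hγ : 0 < γ) :
    (1 - d) * sSup ((fun x' => if y * (inner ℝ w x' : ℝ) < -ρ then (1 : ℝ) else 0) ''
        Metric.closedBall x γ)
      + d * sSup ((fun x' => if y * (inner ℝ w x' : ℝ) ≤ ρ then (1 : ℝ) else 0) ''
        Metric.closedBall x γ)
    = (1 - d) * (if y * (inner ℝ w x : ℝ) < -ρ + γ then (1 : ℝ) else 0)
      + d * (if y * (inner ℝ w x : ℝ) ≤ ρ + γ then (1 : ℝ) else 0) := by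
  classical
  have hy2 : y * y = 1 := by rcases hy with rfl | rfl <;> norm_num
  have hyabs : |y| = 1 := by rcases hy with rfl | rfl <;> norm_num
  have hball : (Metric.closedBall x γ).Nonempty := ⟨x, by simp [hγ.le]⟩
  -- lower bound: for x' in ball, y⟪w,x'⟫ ≥ y⟪w,x⟫ - γ
  have hlb : ∀ x' ∈ Metric.closedBall x γ,
      y * (inner ℝ w (x) : ℝ) - γ ≤ y * (inner ℝ w (x') : ℝ) := by
    intro x' hx'
    have hdist : ‖x' - x‖ ≤ γ := by
      rw [← dist_eq_norm]; exact Metric.mem_closedBall.mp hx'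
    have hcs : |(inner ℝ w (x' - x) : ℝ)| ≤ γ := by
      calc |(inner ℝ w (x' - x) : ℝ)| ≤ ‖w‖ * ‖x' - x‖ := abs_real_inner_le_norm _ _
        _ ≤ 1 * γ := by rw [hw]; exact mul_le_mul_of_nonneg_left hdist one_pos.le
        _ = γ := one_mul γ
    have : |y * (inner ℝ w (x' - x) : ℝ)| ≤ γ := by rw [abs_mul, hyabs, one_mul]; exact hcs
    have hin : (inner ℝ w (x' - x) : ℝ) = (inner ℝ w (x') : ℝ) - (inner ℝ w (x) : ℝ) := inner_sub_right _ _ _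
    have h2 : y * (inner ℝ w (x' - x) : ℝ) = y * (inner ℝ w x' : ℝ) - y * (inner ℝ w x : ℝ) := by
      rw [hin]; ring
    have h3 := (abs_le.mp this).1
    linarith
  -- the minimizer x - (γ*y) • w attains y⟪w,x⟫ - γ
  set x₀ : EuclideanSpace ℝ (Fin n) := x - (γ * y) • w with hx₀
  have hx₀mem : x₀ ∈ Metric.closedBall x γ := by
    rw [Metric.mem_closedBall, dist_eq_norm, hx₀]
    have : x - (γ * y) • w - x = -((γ * y) • w) := by abel
    rw [this, norm_neg, norm_smul, hw, mul_one]
    rw [Real.norm_eq_abs, abs_mul, hyabs, mul_one, abs_of_pos hγ]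
  have hww : (inner ℝ w (w) : ℝ) = 1 := by
    rw [real_inner_self_eq_norm_sq, hw]; norm_num
  have hx₀val : y * (inner ℝ w (x₀) : ℝ) = y * (inner ℝ w (x) : ℝ) - γ := by
    rw [hx₀, inner_sub_right, real_inner_smul_right, hww]
    ring_nf
    nlinarith [hy2]
  have key : ∀ c : ℝ, ((∃ x' ∈ Metric.closedBall x γ, y * (inner ℝ w (x') : ℝ) < c) ↔
      y * (inner ℝ w (x) : ℝ) - γ < c) ∧
      ((∃ x' ∈ Metric.closedBall x γ, y * (inner ℝ w (x') : ℝ) ≤ c) ↔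
      y * (inner ℝ w (x) : ℝ) - γ ≤ c) := by
    intro c
    constructor
    · constructor
      · rintro ⟨x', hx', h⟩; exact lt_of_le_of_lt (hlb x' hx') h
      · intro h; exact ⟨x₀, hx₀mem, by rw [hx₀val]; exact h⟩
    · constructor
      · rintro ⟨x', hx', h⟩; exact le_trans (hlb x' hx') h
      · intro h; exact ⟨x₀, hx₀mem, by rw [hx₀val]; exact h⟩
  have k1 : (∃ x' ∈ Metric.closedBall x γ, y * (inner ℝ w x' : ℝ) < -ρ) ↔
      y * (inner ℝ w x : ℝ) < -ρ + γ := by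
    rw [(key (-ρ)).1]; constructor <;> intro h <;> linarith
  have k2 : (∃ x' ∈ Metric.closedBall x γ, y * (inner ℝ w x' : ℝ) ≤ ρ) ↔
      y * (inner ℝ w x : ℝ) ≤ ρ + γ := by
    rw [(key ρ).2]; constructor <;> intro h <;> linarith
  rw [sSup_indicator_image _ hball, sSup_indicator_image _ hball,
    if_congr k1 rfl rfl, if_congr k2 rfl rfl]
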